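/- Let Σ be a K×K real symmetric positive definite matrix, x ∈ ℝ^K, and set h = Σ⁻¹ x. Then hᵀ Σ h − inf_{λ ∈ ℝ^K, λ_k ≥ 0 for all k} (h − λ)ᵀ Σ (h − λ) = sup_{λ ∈ Λ₊} max(0, λᵀ x)² / (λᵀ Σ λ); that is, the squared Σ-norm of the projection of h onto the nonnegative orthant equals the supremum over coherent linear combinations of the squared positive part of the standardized deviate. -/

import Mathlib

open Matrix

section stmt8aux

variable {K : ℕ} {S : Matrix (Fin K) (Fin K) ℝ}

private lemma stmt8_swap (hsymm : S.IsSymm) (v w : Fin K → ℝ) :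
    v ⬝ᵥ S *ᵥ w = w ⬝ᵥ S *ᵥ v := by
  rw [dotProduct_mulVec, ← mulVec_transpose, hsymm.eq, dotProduct_comm]

private lemma stmt8_expand (hsymm : S.IsSymm) (h μ : Fin K → ℝ) :
    (h - μ) ⬝ᵥ S *ᵥ (h - μ)
      = h ⬝ᵥ S *ᵥ h - 2 * (μ ⬝ᵥ S *ᵥ h) + μ ⬝ᵥ S *ᵥ μ := by
  have hsw := stmt8_swap hsymm h μ
  simp only [mulVec_sub, dotProduct_sub, sub_dotProduct] at *
  linarith

private lemma stmt8_smul (t : ℝ) (l : Fin K → ℝ) :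
    (t • l) ⬝ᵥ S *ᵥ (t • l) = t ^ 2 * (l ⬝ᵥ S *ᵥ l) := by
  rw [mulVec_smul, dotProduct_smul, smul_dotProduct, smul_eq_mul, smul_eq_mul]; ring

private lemma stmt8_cont : Continuous fun v : Fin K → ℝ => v ⬝ᵥ S *ᵥ v := by
  simp only [dotProduct, mulVec]; fun_prop

private lemma stmt8_pos (hS : S.PosDef) {v : Fin K → ℝ} (hv : v ≠ 0) :
    0 < v ⬝ᵥ S *ᵥ v := by
  simpa using hS.dotProduct_mulVec_pos hv

private lemma stmt8_nonneg (hS : S.PosDef) (v : Fin K → ℝ) :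
    0 ≤ v ⬝ᵥ S *ᵥ v := by
  simpa using hS.posSemidef.dotProduct_mulVec_nonneg v

private lemma stmt8_coer (hK : 0 < K) (hS : S.PosDef) :
    ∃ c > 0, ∀ v : Fin K → ℝ, c * ‖v‖ ^ 2 ≤ v ⬝ᵥ S *ᵥ v := by
  haveI : Nonempty (Fin K) := ⟨⟨0, hK⟩⟩
  have hcomp : IsCompact (Metric.sphere (0 : Fin K → ℝ) 1) := isCompact_sphere _ _
  have hne : (Metric.sphere (0 : Fin K → ℝ) 1).Nonempty :=
    NormedSpace.sphere_nonempty.mpr (by norm_num)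
  obtain ⟨u, hu, hmin⟩ := hcomp.exists_isMinOn hne stmt8_cont.continuousOn
  have hu1 : ‖u‖ = 1 := by simpa using hu
  have hu0 : u ≠ 0 := by intro h; rw [h] at hu1; simp at hu1
  refine ⟨u ⬝ᵥ S *ᵥ u, stmt8_pos hS hu0, fun v => ?_⟩
  rcases eq_or_ne v 0 with rfl | hv
  · simp
  · have hnv : (0 : ℝ) < ‖v‖ := norm_pos_iff.mpr hv
    have hmem : (‖v‖⁻¹ • v) ∈ Metric.sphere (0 : Fin K → ℝ) 1 := by
      simp [norm_smul, abs_of_pos (inv_pos.mpr hnv), inv_mul_cancel₀ hnv.ne']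
    have hle := hmin hmem
    simp only [Set.mem_setOf_eq, stmt8_smul] at hle
    have ha2 : (0 : ℝ) < ‖v‖ ^ 2 := by positivity
    have := mul_le_mul_of_nonneg_right hle ha2.le
    have hkey : ‖v‖⁻¹ ^ 2 * (v ⬝ᵥ S *ᵥ v) * ‖v‖ ^ 2 = v ⬝ᵥ S *ᵥ v := by
      field_simp
    linarith [this, hkey ▸ this]

end stmt8aux

/-- Shapiro's duality identity: for a symmetric positive definite
`Σ` and `h = Σ⁻¹ x`, the squared `Σ`-norm of the projection of `h` onto the
nonnegative orthant equals the supremum over coherent combinations `λ ∈ Λ₊` of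
`max(0, λᵀ x)² / (λᵀ Σ λ)`. -/
theorem stmt8 {K : ℕ} (hK : 0 < K)
    (S : Matrix (Fin K) (Fin K) ℝ) (hsymm : S.IsSymm) (hS : S.PosDef)
    (x : Fin K → ℝ) :
    (S⁻¹ *ᵥ x) ⬝ᵥ S *ᵥ (S⁻¹ *ᵥ x)
      - sInf {y : ℝ | ∃ lam : Fin K → ℝ, (∀ k, 0 ≤ lam k) ∧
          y = ((S⁻¹ *ᵥ x) - lam) ⬝ᵥ S *ᵥ ((S⁻¹ *ᵥ x) - lam)}
      = sSup {y : ℝ | ∃ lam : Fin K → ℝ, (∀ k, 0 ≤ lam k) ∧ lam ≠ 0 ∧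
          y = (max 0 (lam ⬝ᵥ x)) ^ 2 / (lam ⬝ᵥ S *ᵥ lam)} := by
  set h : Fin K → ℝ := S⁻¹ *ᵥ x with hh
  have hx : S *ᵥ h = x := by
    rw [hh, mulVec_mulVec, mul_nonsing_inv S (isUnit_iff_ne_zero.mpr hS.det_pos.ne'),
      one_mulVec]
  set f : (Fin K → ℝ) → ℝ := fun lam => (h - lam) ⬝ᵥ S *ᵥ (h - lam) with hf
  set C : Set (Fin K → ℝ) := {lam | ∀ k, 0 ≤ lam k} with hC
  set A : Set ℝ := {y : ℝ | ∃ lam : Fin K → ℝ, (∀ k, 0 ≤ lam k) ∧ y = f lam} with hA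
  set B : Set ℝ := {y : ℝ | ∃ lam : Fin K → ℝ, (∀ k, 0 ≤ lam k) ∧ lam ≠ 0 ∧
      y = (max 0 (lam ⬝ᵥ x)) ^ 2 / (lam ⬝ᵥ S *ᵥ lam)} with hB
  -- coercivity
  obtain ⟨c, hc, hcoer⟩ := stmt8_coer hK hS
  -- existence of a minimizer of f over C
  set R : ℝ := ‖h‖ + Real.sqrt ((h ⬝ᵥ S *ᵥ h) / c) + 1 with hR
  have hQh : 0 ≤ h ⬝ᵥ S *ᵥ h := stmt8_nonneg hS h
  have hsqrt0 : 0 ≤ Real.sqrt ((h ⬝ᵥ S *ᵥ h) / c) := Real.sqrt_nonneg _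
  have hCclosed : IsClosed C := by
    have : C = ⋂ k, (fun lam : Fin K → ℝ => lam k) ⁻¹' Set.Ici 0 := by
      ext lam; simp [Set.mem_iInter, hC]
    rw [this]
    exact isClosed_iInter fun k => isClosed_Ici.preimage (continuous_apply k)
  have hD : IsCompact (C ∩ Metric.closedBall 0 R) :=
    (isCompact_closedBall (0 : Fin K → ℝ) R).inter_left hCclosed
  have h0D : (0 : Fin K → ℝ) ∈ C ∩ Metric.closedBall 0 R := by
    constructor
    · intro k; exact le_refl 0
    · simp [Metric.mem_closedBall]
      positivity
  have hfc : Continuous f := stmt8_cont.comp (continuous_const.sub continuous_id)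
  obtain ⟨lam0, hlam0D, hmin⟩ := hD.exists_isMinOn ⟨0, h0D⟩ hfc.continuousOn
  have hlam0C : lam0 ∈ C := hlam0D.1
  have hf0 : f 0 = h ⬝ᵥ S *ᵥ h := by simp [hf]
  -- lam0 is a global minimizer over C
  have hglobal : ∀ lam ∈ C, f lam0 ≤ f lam := by
    intro lam hlam
    by_cases hball : lam ∈ Metric.closedBall (0 : Fin K → ℝ) R
    · exact hmin ⟨hlam, hball⟩
    · have hle0 : f lam0 ≤ f 0 := hmin h0D
      have hnorm : R < ‖lam‖ := by
        simpa [Metric.mem_closedBall, not_le] using hball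
      have h1 : c * ‖h - lam‖ ^ 2 ≤ f lam := hcoer (h - lam)
      have h2 : ‖lam‖ - ‖h‖ ≤ ‖h - lam‖ := by
        have := norm_sub_norm_le lam h
        have hswap : ‖lam - h‖ = ‖h - lam‖ := norm_sub_rev lam h
        linarith
      have h3 : Real.sqrt ((h ⬝ᵥ S *ᵥ h) / c) < ‖h - lam‖ := by
        rw [hR] at hnorm; linarith
      have h4 : (h ⬝ᵥ S *ᵥ h) / c < ‖h - lam‖ ^ 2 := by
        have := Real.sq_sqrt (by positivity : (0:ℝ) ≤ (h ⬝ᵥ S *ᵥ h) / c)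
        nlinarith [hsqrt0]
      have h5 : h ⬝ᵥ S *ᵥ h < c * ‖h - lam‖ ^ 2 := by
        have := (div_lt_iff₀ hc).mp h4
        linarith
      linarith [hf0 ▸ hle0]
  -- the infimum is attained at lam0
  have hInfA : sInf A = f lam0 := by
    apply IsLeast.csInf_eq
    constructor
    · exact ⟨lam0, hlam0C, rfl⟩
    · rintro y ⟨lam, hlam, rfl⟩
      exact hglobal lam hlam
  -- upper bound: every element of B is at most h⬝Sh - f lam0
  have hub : ∀ y ∈ B, y ≤ h ⬝ᵥ S *ᵥ h - f lam0 := by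
    rintro y ⟨lam, hlpos, hlne, rfl⟩
    have hd : 0 < lam ⬝ᵥ S *ᵥ lam := stmt8_pos hS hlne
    have hm0 : f lam0 ≤ h ⬝ᵥ S *ᵥ h := hf0 ▸ hglobal 0 (fun k => le_refl 0)
    rcases le_or_gt (lam ⬝ᵥ x) 0 with hle | hbpos
    · rw [max_eq_left hle]
      have hz : (0 : ℝ) ^ 2 / (lam ⬝ᵥ S *ᵥ lam) = 0 := by norm_num
      rw [hz]
      linarith
    · rw [max_eq_right hbpos.le]
      set t : ℝ := (lam ⬝ᵥ x) / (lam ⬝ᵥ S *ᵥ lam) with ht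
      have htpos : 0 < t := div_pos hbpos hd
      have hmuC : (t • lam) ∈ C := fun k => mul_nonneg htpos.le (hlpos k)
      have hmle : f lam0 ≤ f (t • lam) := hglobal _ hmuC
      have hexp : f (t • lam)
          = h ⬝ᵥ S *ᵥ h - 2 * (t * (lam ⬝ᵥ x)) + t ^ 2 * (lam ⬝ᵥ S *ᵥ lam) := by
        simp only [hf]
        rw [stmt8_expand hsymm, stmt8_smul, smul_dotProduct, smul_eq_mul, hx]
      have hval : 2 * (t * (lam ⬝ᵥ x)) - t ^ 2 * (lam ⬝ᵥ S *ᵥ lam)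
          = (lam ⬝ᵥ x) ^ 2 / (lam ⬝ᵥ S *ᵥ lam) := by
        rw [ht]; field_simp; ring
      rw [hexp] at hmle
      linarith
  -- B is nonempty
  have hBne : B.Nonempty := by
    refine ⟨_, Pi.single ⟨0, hK⟩ 1, ?_, ?_, rfl⟩
    · intro k
      rcases eq_or_ne k ⟨0, hK⟩ with rfl | hk
      · simp
      · simp [Pi.single_apply, hk]
    · intro hcontra
      have := congrFun hcontra ⟨0, hK⟩
      simp at this
  have hBnonneg : ∀ y ∈ B, 0 ≤ y := by
    rintro y ⟨lam, _, hlne, rfl⟩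
    exact div_nonneg (by positivity) (stmt8_pos hS hlne).le
  rw [hInfA]
  by_cases hl0 : lam0 = 0
  · -- projection is zero: both sides are 0
    have hfl : f lam0 = h ⬝ᵥ S *ᵥ h := by rw [hl0, hf0]
    have hub0 : ∀ y ∈ B, y ≤ 0 := by
      intro y hy
      have := hub y hy
      rw [hfl] at this
      linarith
    obtain ⟨y0, hy0⟩ := id hBne
    have hy0eq : y0 = 0 := le_antisymm (hub0 y0 hy0) (hBnonneg y0 hy0)
    rw [hfl, sub_self]
    exact (le_antisymm (csSup_le hBne hub0) (hy0eq ▸ le_csSup ⟨0, hub0⟩ hy0)).symm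
  · -- projection nonzero: optimality along the ray through lam0
    set b : ℝ := lam0 ⬝ᵥ x with hb
    set d : ℝ := lam0 ⬝ᵥ S *ᵥ lam0 with hd
    have hdpos : 0 < d := stmt8_pos hS hl0
    have hray : ∀ t : ℝ, 0 ≤ t → f lam0 ≤ h ⬝ᵥ S *ᵥ h - 2 * (t * b) + t ^ 2 * d := by
      intro t htnn
      have hmem : (t • lam0) ∈ C := fun k => mul_nonneg htnn (hlam0C k)
      have hgl := hglobal _ hmem
      have expand : f (t • lam0) = h ⬝ᵥ S *ᵥ h - 2 * (t * b) + t ^ 2 * d := by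
        simp only [hf]
        rw [stmt8_expand hsymm, stmt8_smul, smul_dotProduct, smul_eq_mul, hx, ← hb, ← hd]
      rw [expand] at hgl
      exact hgl
    have hflam0 : f lam0 = h ⬝ᵥ S *ᵥ h - 2 * b + d := by
      simp only [hf]
      rw [stmt8_expand hsymm, hx, ← hb, ← hd]
    have hb2 : d ≤ 2 * b := by
      have := hray 0 le_rfl
      rw [hflam0] at this; linarith
    have hbpos : 0 < b := by linarith
    have hdne : d ≠ 0 := hdpos.ne'
    have hbd : b = d := by
      have hkey := hray (b / d) (by positivity)
      rw [hflam0] at hkey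
      have key : -2 * b + d ≤ -2 * (b / d * b) + (b / d) ^ 2 * d := by linarith
      have key2 := mul_le_mul_of_nonneg_right key hdpos.le
      have e1 : (-2 * (b / d * b) + (b / d) ^ 2 * d) * d = -b ^ 2 := by
        field_simp
        ring
      rw [e1] at key2
      have h9 : (b - d) ^ 2 ≤ 0 := by nlinarith
      have h10 : (b - d) ^ 2 = 0 := le_antisymm h9 (sq_nonneg _)
      have h11 : b - d = 0 := by
        exact (pow_eq_zero_iff two_ne_zero).mp h10
      linarith
    have hvalue : h ⬝ᵥ S *ᵥ h - f lam0 = (max 0 b) ^ 2 / d := by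
      rw [hflam0, max_eq_right hbpos.le]
      have hb2d : b ^ 2 / d = b := by
        rw [← hbd, sq, mul_div_assoc, div_self hbpos.ne', mul_one]
      rw [hb2d, ← hbd]
      ring
    have hmemB : h ⬝ᵥ S *ᵥ h - f lam0 ∈ B := ⟨lam0, hlam0C, hl0, by rw [hvalue, hb, hd]⟩
    exact le_antisymm (le_csSup ⟨h ⬝ᵥ S *ᵥ h - f lam0, hub⟩ hmemB)
      (csSup_le hBne hub)
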